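/- Let p be a prime with p ≥ 5, let h and r be natural numbers, and let m : Fin r → ℕ satisfy m i ≥ p for all i. If the rational number S = 2h − 2 + ∑ i, (1 − 1/(m i)) satisfies 0 < S ≤ 1 − 3/p, then h = 0, r = 3, and m i = p for all i. -/

import Mathlib

/-- Signature computation for Theorem 4.2: if all periods `m i` are at least `p ≥ 5`
and `S = 2h - 2 + ∑ i, (1 - 1/(m i))` satisfies `0 < S ≤ 1 - 3/p`, then the signature
is that of the triangle group `Γ(0; p, p, p)`. -/
theorem dyck_signature_ppp (p : ℕ) (hp : p.Prime) (hp5 : 5 ≤ p)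
    (h r : ℕ) (m : Fin r → ℕ) (hm : ∀ i, p ≤ m i)
    (S : ℚ) (hS : S = 2 * (h : ℚ) - 2 + ∑ i, (1 - 1 / (m i : ℚ)))
    (hpos : 0 < S) (hle : S ≤ 1 - 3 / (p : ℚ)) :
    h = 0 ∧ r = 3 ∧ ∀ i, m i = p := by
  have hq5 : (5:ℚ) ≤ (p:ℚ) := by exact_mod_cast hp5
  have hq0 : (0:ℚ) < (p:ℚ) := by linarith
  have hmq : ∀ i, (p:ℚ) ≤ (m i : ℚ) := fun i => by exact_mod_cast hm i
  have hm0 : ∀ i, (0:ℚ) < (m i : ℚ) := fun i => lt_of_lt_of_le hq0 (hmq i)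
  have hinv : ∀ i, 1/(m i : ℚ) ≤ 1/(p:ℚ) := fun i =>
    one_div_le_one_div_of_le hq0 (hmq i)
  have hinvp : (0:ℚ) < 1/(p:ℚ) := by positivity
  have hp13 : 1/(p:ℚ) < 3/(p:ℚ) := by
    have : 3/(p:ℚ) - 1/(p:ℚ) = 2/(p:ℚ) := by ring
    have h2 : (0:ℚ) < 2/(p:ℚ) := by positivity
    linarith
  have hsum_lo : (r:ℚ) * (1 - 1/(p:ℚ)) ≤ ∑ i, (1 - 1/(m i:ℚ)) := by
    have := Finset.sum_le_sum (s := Finset.univ)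
      (fun (i : Fin r) _ => by linarith [hinv i] : ∀ i ∈ Finset.univ, (1 - 1/(p:ℚ)) ≤ 1 - 1/(m i:ℚ))
    rw [Finset.sum_const, Finset.card_univ, Fintype.card_fin, nsmul_eq_mul] at this
    linarith
  have hsum_hi : ∑ i, (1 - 1/(m i:ℚ)) ≤ (r:ℚ) := by
    have := Finset.sum_le_sum (s := Finset.univ)
      (fun (i : Fin r) _ => by
        have := hm0 i
        have : (0:ℚ) < 1/(m i:ℚ) := by positivity
        linarith : ∀ i ∈ Finset.univ, (1 - 1/(m i:ℚ)) ≤ 1)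
    simpa [Finset.sum_const, Finset.card_univ] using this
  -- h = 0
  have hh : h = 0 := by
    by_contra hh
    have h1 : 1 ≤ h := Nat.one_le_iff_ne_zero.mpr hh
    have h1q : (1:ℚ) ≤ (h:ℚ) := by exact_mod_cast h1
    rcases Nat.eq_zero_or_pos r with hr | hr
    · subst hr
      simp only [Finset.univ_eq_empty, Finset.sum_empty, add_zero] at hS
      have h2 : (1:ℚ) < (h:ℚ) := by linarith [hpos, hS.symm ▸ hpos]
      have h2n : 2 ≤ h := by exact_mod_cast (by exact_mod_cast h2 : (1:ℕ) < h)
      have h2q : (2:ℚ) ≤ (h:ℚ) := by exact_mod_cast h2n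
      linarith
    · have hr1 : (1:ℚ) ≤ (r:ℚ) := by exact_mod_cast hr
      have h15 : 1/(p:ℚ) ≤ 1/5 := one_div_le_one_div_of_le (by norm_num) hq5
      have hnn : (0:ℚ) ≤ 1 - 1/(p:ℚ) := by linarith
      have : (1:ℚ) * (1 - 1/(p:ℚ)) ≤ (r:ℚ) * (1 - 1/(p:ℚ)) :=
        mul_le_mul_of_nonneg_right hr1 hnn
      linarith
  subst hh
  -- r = 3
  have hr3 : r = 3 := by
    have hgt : (2:ℚ) < (r:ℚ) := by
      simp only [Nat.cast_zero, mul_zero] at hS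
      linarith
    have hlt : (r:ℚ) < 4 := by
      by_contra hr4
      push_neg at hr4
      have hnn : (0:ℚ) ≤ 1 - 1/(p:ℚ) := by linarith [one_div_le_one_div_of_le (by norm_num : (0:ℚ) < 5) hq5]
      have : (4:ℚ) * (1 - 1/(p:ℚ)) ≤ (r:ℚ) * (1 - 1/(p:ℚ)) :=
        mul_le_mul_of_nonneg_right hr4 hnn
      have h15 : 1/(p:ℚ) ≤ 1/5 := one_div_le_one_div_of_le (by norm_num) hq5
      simp only [Nat.cast_zero, mul_zero] at hS
      linarith [hp13]
    have h2n : 2 < r := by exact_mod_cast hgt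
    have h4n : r < 4 := by exact_mod_cast hlt
    omega
  subst hr3
  refine ⟨rfl, rfl, ?_⟩
  -- now show m i = p
  have hsplit : ∑ i : Fin 3, (1 - 1/(m i:ℚ)) = 3 - ∑ i : Fin 3, 1/(m i:ℚ) := by
    rw [Finset.sum_sub_distrib]
    simp
  have hsum3 : 3/(p:ℚ) ≤ ∑ i : Fin 3, 1/(m i:ℚ) := by
    simp only [Nat.cast_zero, mul_zero] at hS
    rw [hsplit] at hS
    linarith
  have hkey : ∑ i : Fin 3, (1/(p:ℚ) - 1/(m i:ℚ)) ≤ 0 := by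
    rw [Finset.sum_sub_distrib, Finset.sum_const, Finset.card_univ]
    simp only [Fintype.card_fin]
    have : (3:ℕ) • (1/(p:ℚ)) = 3/(p:ℚ) := by
      simp [nsmul_eq_mul]; ring
    rw [this]
    linarith
  have hzero : ∀ i ∈ (Finset.univ : Finset (Fin 3)), 1/(p:ℚ) - 1/(m i:ℚ) = 0 := by
    rw [← Finset.sum_eq_zero_iff_of_nonneg (fun i _ => by linarith [hinv i])]
    have hge : (0:ℚ) ≤ ∑ i : Fin 3, (1/(p:ℚ) - 1/(m i:ℚ)) :=
      Finset.sum_nonneg (fun i _ => by linarith [hinv i])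
    linarith
  intro i
  have h0 := hzero i (Finset.mem_univ i)
  have hne : (m i : ℚ) ≠ 0 := ne_of_gt (hm0 i)
  have hpe : (p:ℚ) ≠ 0 := ne_of_gt hq0
  have : (m i : ℚ) = (p:ℚ) := by
    field_simp at h0
    linarith
  exact_mod_cast this
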